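/- Let q be a prime power, F = GF(q^3), K = GF(q), and let ξ be a primitive element of F. Then the set S = {ξK*} ∪ {(1 + tξ)K* : t ∈ K} of cosets is a perfect difference set for the cyclic group G = F*/K*: every non-identity element of G can be written in exactly one way as a quotient s·t^{-1} of two elements s, t ∈ S. -/

import Mathlib

/-- The subgroup of `Fˣ` consisting of units lying in the subfield `K`. -/
def unitsIn {F : Type*} [Field F] (K : Subfield F) : Subgroup Fˣ where
  carrier := {u | (u : F) ∈ K}
  mul_mem' := fun ha hb => K.mul_mem ha hb
  one_mem' := K.one_mem
  inv_mem' := fun {u} hu => by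
    simpa [Units.val_inv_eq_inv_val] using K.inv_mem hu

set_option maxHeartbeats 1600000 in
set_option synthInstance.maxHeartbeats 400000 in
theorem singer_perfect_difference_set (q : ℕ) (hq : IsPrimePow q)
    (F : Type*) [Field F] [Fintype F] (K : Subfield F)
    (hK : Nat.card K = q) (hF : Nat.card F = q ^ 3)
    (ξ : Fˣ) (hξ : ∀ x : Fˣ, x ∈ Subgroup.zpowers ξ) :
    ∀ g : Fˣ ⧸ unitsIn K, g ≠ 1 →
      ∃! p : (Fˣ ⧸ unitsIn K) × (Fˣ ⧸ unitsIn K),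
        p.1 ∈ {g : Fˣ ⧸ unitsIn K |
            ∃ u : Fˣ, (QuotientGroup.mk u : Fˣ ⧸ unitsIn K) = g ∧
              ((u : F) = (ξ : F) ∨ ∃ t ∈ K, (u : F) = 1 + t * (ξ : F))} ∧
        p.2 ∈ {g : Fˣ ⧸ unitsIn K |
            ∃ u : Fˣ, (QuotientGroup.mk u : Fˣ ⧸ unitsIn K) = g ∧
              ((u : F) = (ξ : F) ∨ ∃ t ∈ K, (u : F) = 1 + t * (ξ : F))} ∧
        p.1 * p.2⁻¹ = g := by
  classical
  have hq2 : 2 ≤ q := hq.two_le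
  haveI : Fintype K := Fintype.ofFinite K
  set ξv : F := (ξ : F) with hξv
  have hξ0 : ξv ≠ 0 := Units.ne_zero ξ
  -- the rank of F over K is 3
  have hcard : Nat.card F = Nat.card K ^ Module.finrank K F := by
    simpa [Nat.card_eq_fintype_card] using Module.card_eq_pow_finrank (K := K) (V := F)
  have hrank : Module.finrank K F = 3 := by
    have h3 : q ^ 3 = q ^ Module.finrank K F := by rw [← hF, hcard, hK]
    exact (Nat.pow_right_injective hq2 h3).symm
  -- ξ is not in K
  have hξK : ξv ∉ K := by
    intro hmem
    have hall : ∀ y : F, y ∈ K := by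
      intro y
      rcases eq_or_ne y 0 with rfl | hy
      · exact K.zero_mem
      · obtain ⟨n, hn⟩ := hξ (Units.mk0 y hy)
        have hv : ξv ^ n = y := by
          have h' := congrArg (Units.val) hn
          simpa [Units.val_zpow_eq_zpow_val] using h'
        rw [← hv]
        exact K.zpow_mem hmem n
    have hcardeq : Nat.card K = Nat.card F :=
      Nat.card_congr (Equiv.ofBijective (fun k => (k : F))
        ⟨Subtype.val_injective, fun y => ⟨⟨y, hall y⟩, rfl⟩⟩)
    rw [hK, hF] at hcardeq
    have : q ^ 1 = q ^ 3 := by simpa using hcardeq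
    have := Nat.pow_right_injective hq2 this
    omega
  -- linear dependence helper
  have hdep : ∀ (a b : K) (y : F), y ∉ K → (a : F) + (b : F) * y = 0 → a = 0 ∧ b = 0 := by
    intro a b y hy h
    rcases eq_or_ne b 0 with rfl | hb
    · refine ⟨?_, rfl⟩
      have : (a : F) = 0 := by simpa using h
      exact_mod_cast this
    · exfalso
      apply hy
      have hb' : (b : F) ≠ 0 := fun h0 => hb (by exact_mod_cast h0)
      have hy' : y = ((-a * b⁻¹ : K) : F) := by
        have h1 : y = -(a : F) * ((b : F))⁻¹ := by
          field_simp
          linear_combination h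
        rw [h1]
        push_cast
        ring
      rw [hy']
      exact SetLike.coe_mem _
  intro g hg
  induction g using QuotientGroup.induction_on with
  | H x =>
  have hxK : (x : F) ∉ K := fun h => hg ((QuotientGroup.eq_one_iff x).2 h)
  have hx0 : (x : F) ≠ 0 := Units.ne_zero x
  set V : Submodule K F := Submodule.span K (Set.range ![(1 : F), ξv]) with hV
  set W : Submodule K F := Submodule.span K (Set.range ![(x : F), (x : F) * ξv]) with hW
  have hsmul : ∀ (c : K) (y : F), c • y = (c : F) * y := fun c y => rfl
  have hmemV : ∀ y : F, y ∈ V ↔ ∃ a b : K, y = (a : F) + (b : F) * ξv := by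
    intro y
    rw [hV, show Set.range ![(1 : F), ξv] = {(1 : F), ξv} by
      simp [Set.pair_comm], Submodule.mem_span_pair]
    constructor
    · rintro ⟨a, b, hab⟩
      exact ⟨a, b, by rw [← hab, hsmul, hsmul, mul_one]⟩
    · rintro ⟨a, b, hab⟩
      exact ⟨a, b, by rw [hsmul, hsmul, mul_one, hab]⟩
  have hmemW : ∀ y : F, y ∈ W ↔ ∃ a b : K, y = (x : F) * ((a : F) + (b : F) * ξv) := by
    intro y
    rw [hW, show Set.range ![(x : F), (x : F) * ξv] = {(x : F), (x : F) * ξv} by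
      simp [Set.pair_comm], Submodule.mem_span_pair]
    constructor
    · rintro ⟨a, b, hab⟩
      exact ⟨a, b, by rw [← hab, hsmul, hsmul]; ring⟩
    · rintro ⟨a, b, hab⟩
      exact ⟨a, b, by rw [hsmul, hsmul, hab]; ring⟩
  have hindepV : LinearIndependent K ![(1 : F), ξv] := by
    rw [LinearIndependent.pair_iff]
    intro s t hst
    exact hdep s t ξv hξK (by rw [hsmul, hsmul, mul_one] at hst; exact hst)
  have hindepW : LinearIndependent K ![(x : F), (x : F) * ξv] := by
    rw [LinearIndependent.pair_iff]
    intro s t hst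
    apply hdep s t ξv hξK
    have hx : (x : F) * ((s : F) + (t : F) * ξv) = 0 := by
      rw [hsmul, hsmul] at hst
      linear_combination hst
    exact (mul_eq_zero.mp hx).resolve_left hx0
  have hrV : Module.finrank K V = 2 := by
    simpa using finrank_span_eq_card hindepV
  have hrW : Module.finrank K W = 2 := by
    simpa using finrank_span_eq_card hindepW
  have hsup : Module.finrank K ↥(V ⊔ W) ≤ 3 := hrank ▸ Submodule.finrank_le _
  have hsum := Submodule.finrank_sup_add_finrank_inf_eq V W
  rw [hrV, hrW] at hsum
  -- V ≠ W
  have hVW : V ≠ W := by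
    intro hEq
    have h1V : (1 : F) ∈ V := (hmemV 1).2 ⟨1, 0, by push_cast; ring⟩
    have hmul : ∀ y ∈ V, (x : F) * y ∈ V := by
      intro y hy
      obtain ⟨a, b, hab⟩ := (hmemV y).1 hy
      rw [hEq]
      exact (hmemW _).2 ⟨a, b, by rw [hab]⟩
    have hxV : (x : F) ∈ V := by simpa using hmul 1 h1V
    have hx2V : (x : F) * (x : F) ∈ V := hmul _ hxV
    obtain ⟨a1, b1, hx1⟩ := (hmemV _).1 hxV
    obtain ⟨a2, b2, hx2⟩ := (hmemV _).1 hx2V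
    have hb1 : b1 ≠ 0 := by
      intro h0
      apply hxK
      have hxa : (x : F) = (a1 : F) := by
        rw [hx1, h0]
        push_cast
        ring
      rw [hxa]
      exact a1.2
    · have hint : IsIntegral K ((x : F)) := .of_finite K _
      set p : Polynomial K := Polynomial.C b1 * Polynomial.X ^ 2 +
        Polynomial.C (-b2) * Polynomial.X + Polynomial.C (b2 * a1 - b1 * a2) with hp
      have hpdeg : p.natDegree = 2 := Polynomial.natDegree_quadratic hb1
      have hp0 : p ≠ 0 := fun h0 => by simp [h0] at hpdeg
      have haev : Polynomial.aeval ((x : F)) p = 0 := by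
        rw [hp]
        simp only [map_add, map_mul, map_neg, map_sub, Polynomial.aeval_C,
          Polynomial.aeval_X, map_pow]
        simp only [show ∀ z : K, algebraMap K F z = (z : F) from fun z => rfl]
        linear_combination ((b1 : F)) * hx2 - ((b2 : F)) * hx1
      have hdvd := minpoly.dvd K ((x : F)) haev
      have hdle : (minpoly K ((x : F))).natDegree ≤ 2 :=
        hpdeg ▸ Polynomial.natDegree_le_of_dvd hdvd hp0
      have hddvd : (minpoly K ((x : F))).natDegree ∣ 3 :=
        hrank ▸ minpoly.degree_dvd hint
      have hpos : 0 < (minpoly K ((x : F))).natDegree := minpoly.natDegree_pos hint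
      have hone : (minpoly K ((x : F))).natDegree = 1 := by
        rcases (Nat.prime_three.eq_one_or_self_of_dvd _ hddvd) with h | h <;> omega
      obtain ⟨k, hk⟩ := minpoly.natDegree_eq_one_iff.mp hone
      exact hxK (hk ▸ k.2)
  -- V ⊓ W has rank 1
  have hinf1 : Module.finrank K ↥(V ⊓ W) = 1 := by
    have hle : Module.finrank K ↥(V ⊓ W) ≤ 2 :=
      hrV ▸ Submodule.finrank_mono inf_le_left
    have hne2 : Module.finrank K ↥(V ⊓ W) ≠ 2 := by
      intro h2
      apply hVW
      have e1 : V ⊓ W = V :=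
        Submodule.eq_of_le_of_finrank_le inf_le_left (by omega)
      have e2 : V ⊓ W = W :=
        Submodule.eq_of_le_of_finrank_le inf_le_right (by omega)
      rw [← e1, e2]
    omega
  haveI : Module.Free K ↥(V ⊓ W) := Module.Free.of_divisionRing _ _
  obtain ⟨v, hv0, hvgen⟩ := finrank_eq_one_iff'.mp hinf1
  have hvne : ((v : F)) ≠ 0 := fun h => hv0 (Subtype.ext h)
  have hvV : ((v : F)) ∈ V := v.2.1
  have hvW : ((v : F)) ∈ W := v.2.2
  obtain ⟨a, b, hvw⟩ := (hmemW _).1 hvW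
  set w0 : F := (a : F) + (b : F) * ξv with hw0
  have hw0V : w0 ∈ V := (hmemV w0).2 ⟨a, b, rfl⟩
  have hw0ne : w0 ≠ 0 := fun h => hvne (by rw [hvw, h, mul_zero])
  set vu : Fˣ := Units.mk0 ((v : F)) hvne with hvu
  set wu : Fˣ := Units.mk0 w0 hw0ne with hwu
  -- membership in S for units with value in V
  have hS : ∀ u : Fˣ, (u : F) ∈ V →
      ∃ u' : Fˣ, (QuotientGroup.mk u' : Fˣ ⧸ unitsIn K) = QuotientGroup.mk u ∧
        ((u' : F) = ξv ∨ ∃ t ∈ K, (u' : F) = 1 + t * ξv) := by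
    intro u hu
    obtain ⟨a', b', hab⟩ := (hmemV _).1 hu
    rcases eq_or_ne a' 0 with rfl | ha
    · have hb : (b' : F) ≠ 0 := by
        intro h
        apply Units.ne_zero u
        rw [hab, h]
        push_cast
        ring
      refine ⟨ξ, ?_, Or.inl rfl⟩
      refine (QuotientGroup.eq).2 ?_
      show ((ξ⁻¹ * u : Fˣ) : F) ∈ K
      have hval : ((ξ⁻¹ * u : Fˣ) : F) = (b' : F) := by
        rw [Units.val_mul, Units.val_inv_eq_inv_val, hab]
        push_cast
        field_simp
        rw [hξv]; ring
      rw [hval]; exact b'.2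
    · have ha' : (a' : F) ≠ 0 := fun h0 => ha (by exact_mod_cast h0)
      have hfac : (a' : F) * (1 + ((a'⁻¹ * b' : K) : F) * ξv) = (u : F) := by
        rw [hab]; push_cast; field_simp
      have hne : (1 : F) + ((a'⁻¹ * b' : K) : F) * ξv ≠ 0 := by
        intro h
        apply Units.ne_zero u
        rw [← hfac, h, mul_zero]
      refine ⟨Units.mk0 _ hne, ?_, Or.inr ⟨((a'⁻¹ * b' : K) : F), SetLike.coe_mem _, rfl⟩⟩
      refine (QuotientGroup.eq).2 ?_
      show (((Units.mk0 _ hne)⁻¹ * u : Fˣ) : F) ∈ K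
      have hval : (((Units.mk0 _ hne)⁻¹ * u : Fˣ) : F) = (a' : F) := by
        have hu0 : (a' : F) + (b' : F) * ξv ≠ 0 := hab ▸ Units.ne_zero u
        rw [Units.val_mul, Units.val_inv_eq_inv_val, Units.val_mk0, ← hfac]
        field_simp
        rw [div_self]; rwa [div_eq_inv_mul]
      rw [hval]; exact a'.2
  -- converse: members of S have a representative in V
  have hS' : ∀ (c : Fˣ ⧸ unitsIn K),
      (∃ u : Fˣ, (QuotientGroup.mk u : Fˣ ⧸ unitsIn K) = c ∧
        ((u : F) = ξv ∨ ∃ t ∈ K, (u : F) = 1 + t * ξv)) →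
      ∃ u : Fˣ, (QuotientGroup.mk u : Fˣ ⧸ unitsIn K) = c ∧ (u : F) ∈ V := by
    rintro c ⟨u, hu, h | ⟨t, ht, h⟩⟩
    · exact ⟨u, hu, (hmemV _).2 ⟨0, 1, by rw [h]; push_cast; ring⟩⟩
    · exact ⟨u, hu, (hmemV _).2 ⟨1, ⟨t, ht⟩, by rw [h]; push_cast; ring⟩⟩
  have hprod : vu * wu⁻¹ = x := by
    ext
    rw [Units.val_mul, Units.val_inv_eq_inv_val, hvu, hwu, Units.val_mk0, Units.val_mk0,
      hvw]
    field_simp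
  refine ⟨(QuotientGroup.mk vu, QuotientGroup.mk wu), ⟨?_, ?_, ?_⟩, ?_⟩
  · exact hS vu (by rw [hvu, Units.val_mk0]; exact hvV)
  · exact hS wu (by rw [hwu, Units.val_mk0]; exact hw0V)
  · show QuotientGroup.mk vu * (QuotientGroup.mk wu)⁻¹ = _
    rw [← QuotientGroup.mk_inv, ← QuotientGroup.mk_mul, hprod]
  · rintro ⟨s, t⟩ ⟨hs, ht, hst⟩
    obtain ⟨u, hu, huV⟩ := hS' s hs
    obtain ⟨w, hw, hwV⟩ := hS' t ht
    simp only at hst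
    -- the element k
    have hux : (QuotientGroup.mk (u * w⁻¹) : Fˣ ⧸ unitsIn K) = QuotientGroup.mk x := by
      rw [QuotientGroup.mk_mul, QuotientGroup.mk_inv, hu, hw, hst]
    have hk : (((u * w⁻¹)⁻¹ * x : Fˣ) : F) ∈ K := (QuotientGroup.eq).1 hux
    set k : Fˣ := (u * w⁻¹)⁻¹ * x with hkdef
    have hkval : (k : F) = (w : F) * (u : F)⁻¹ * (x : F) := by
      rw [hkdef]
      simp only [Units.val_mul, Units.val_inv_eq_inv_val, mul_inv_rev, inv_inv]
    -- u * k ∈ V ⊓ W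
    have hukV : ((u * k : Fˣ) : F) ∈ V := by
      have : ((u * k : Fˣ) : F) = (⟨(k : F), hk⟩ : K) • (u : F) := by
        rw [hsmul, Units.val_mul]; ring
      rw [this]
      exact V.smul_mem _ huV
    have hukW : ((u * k : Fˣ) : F) ∈ W := by
      obtain ⟨a', b', hab⟩ := (hmemV _).1 hwV
      refine (hmemW _).2 ⟨a', b', ?_⟩
      rw [Units.val_mul, hkval, ← hab]
      field_simp
    have hukne : ((u * k : Fˣ) : F) ≠ 0 := Units.ne_zero _
    obtain ⟨c, hcv⟩ := hvgen ⟨((u * k : Fˣ) : F), hukV, hukW⟩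
    have hcval : (c : F) * (v : F) = ((u * k : Fˣ) : F) := by
      have h' := congrArg (Subtype.val) hcv
      simpa [hsmul] using h'
    have hcne : (c : F) ≠ 0 := by
      intro h
      apply hukne
      rw [← hcval, h, zero_mul]
    -- s = mk vu
    have hsvu : s = QuotientGroup.mk vu := by
      rw [← hu]
      refine (QuotientGroup.eq).2 ?_
      show ((u⁻¹ * vu : Fˣ) : F) ∈ K
      have hval : ((u⁻¹ * vu : Fˣ) : F) = (c : F)⁻¹ * (k : F) := by
        rw [Units.val_mul, Units.val_inv_eq_inv_val, hvu, Units.val_mk0]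
        have hv' : (v : F) = (c : F)⁻¹ * ((u : F) * (k : F)) := by
          rw [← Units.val_mul, ← hcval]
          field_simp
        rw [hv']
        field_simp
      rw [hval]
      exact K.mul_mem (K.inv_mem c.2) hk
    refine Prod.ext hsvu ?_
    show t = QuotientGroup.mk wu
    have h1 : QuotientGroup.mk vu * t⁻¹ = (QuotientGroup.mk x : Fˣ ⧸ unitsIn K) := by
      rw [← hsvu]; exact hst
    have h2 : QuotientGroup.mk vu * (QuotientGroup.mk wu)⁻¹ =
        (QuotientGroup.mk x : Fˣ ⧸ unitsIn K) := by
      rw [← QuotientGroup.mk_inv, ← QuotientGroup.mk_mul, hprod]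
    have h3 : t⁻¹ = (QuotientGroup.mk vu : Fˣ ⧸ unitsIn K)⁻¹ * QuotientGroup.mk x := by
      rw [← h1, inv_mul_cancel_left]
    have h4 : ((QuotientGroup.mk wu : Fˣ ⧸ unitsIn K))⁻¹ =
        (QuotientGroup.mk vu : Fˣ ⧸ unitsIn K)⁻¹ * QuotientGroup.mk x := by
      rw [← h2, inv_mul_cancel_left]
    exact inv_injective (h3.trans h4.symm)
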